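/- arXiv:1803.08824 — 2 statements merged into one kernel-verified Lean document; each statement's English description precedes it below -/
import Mathlib

section
/- Let 𝒜 and ℬ be disjoint families of nonempty subsets of [n], 𝔮 = Σ_{A ∈ 𝒜} 𝔰_A, and suppose every set composition of [n] lies in 𝒦 ∪ 𝒥, where 𝒦 = {π⃗ : some A ∈ 𝒜 has #A_π⃗ ≠ 1} and 𝒥 = {π⃗ : some B ∈ ℬ has #B_π⃗ = 1}. Then Σ_{𝒯 ⊆ ℬ} (−1)^{#𝒯} Ψ(𝔮 + Σ_{T ∈ 𝒯} 𝔰_T) = 0, where Ψ(𝔭) = Σ_{f 𝔭-generic} x_f is the chromatic quasisymmetric function. -/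
open Pointwise
open scoped Classical

/-- The simplex `𝔰_A = conv{e_j : j ∈ A}` in `ℝⁿ`. -/
noncomputable def smplx {n : ℕ} (A : Finset (Fin n)) : Set (Fin n → ℝ) :=
  convexHull ℝ ((fun j => Pi.single j (1 : ℝ)) '' ↑A)

/-- The face of a polytope `S` minimizing the linear functional `F`. -/
def faceMin {n : ℕ} (S : Set (Fin n → ℝ)) (F : (Fin n → ℝ) → ℝ) : Set (Fin n → ℝ) :=
  {x ∈ S | ∀ y ∈ S, F x ≤ F y}

/-- A coloring `f : [n] → ℕ` is `𝔭`-generic if the face of `𝔭` minimizing the linear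
functional `x ↦ ∑ i, f i * x i` is a point. -/
def IsGeneric {n : ℕ} (P : Set (Fin n → ℝ)) (f : Fin n → ℕ) : Prop :=
  ∃ x : Fin n → ℝ, faceMin P (fun x => ∑ i, (f i : ℝ) * x i) = {x}

/-- The chromatic quasisymmetric function `Ψ(𝔭) = ∑_{f 𝔭-generic} x_f` of a polytope
`𝔭 ⊆ ℝⁿ`, as a power series: the coefficient of the monomial `d` is the number of
`𝔭`-generic colorings using each color `c` exactly `d c` times. -/
noncomputable def chromQ {n : ℕ} (P : Set (Fin n → ℝ)) : MvPowerSeries ℕ ℚ :=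
  fun d => (Nat.card {f : Fin n → ℕ // IsGeneric P f ∧
    ∀ c : ℕ, Nat.card {i : Fin n // f i = c} = d c} : ℚ)

/-- The set of minimizers of the coloring `f` on `A` is a singleton, i.e. `#A_π⃗(f) = 1`. -/
def UniqMinN {n : ℕ} (f : Fin n → ℕ) (A : Finset (Fin n)) : Prop :=
  ∃! j, j ∈ A ∧ ∀ k ∈ A, f j ≤ f k

/-! ### Auxiliary material -/

/-- The linear functional `x ↦ ∑ i, f i * x i`. -/
noncomputable def LF {n : ℕ} (f : Fin n → ℕ) : (Fin n → ℝ) →ₗ[ℝ] ℝ :=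
  ∑ i, (f i : ℝ) • LinearMap.proj i

lemma LF_apply {n : ℕ} (f : Fin n → ℕ) (x : Fin n → ℝ) :
    LF f x = ∑ i, (f i : ℝ) * x i := by
  simp [LF, LinearMap.proj_apply]

/-- vertex `e_j`. -/
noncomputable def ev {n : ℕ} (j : Fin n) : Fin n → ℝ := Pi.single j (1 : ℝ)

lemma ev_injective {n : ℕ} : Function.Injective (ev (n := n)) := by
  intro j k h
  by_contra hjk
  have := congrFun h j
  simp [ev, Pi.single_apply, hjk] at this

lemma LF_ev {n : ℕ} (f : Fin n → ℕ) (j : Fin n) : LF f (ev j) = f j := by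
  rw [LF_apply]
  simp [ev, Pi.single_apply, mul_ite]

lemma smplx_eq {n : ℕ} (A : Finset (Fin n)) : smplx A = convexHull ℝ (ev '' ↑A) := rfl

/-- Every point of the convex hull has `L`-value at least the min on the base set. -/
lemma le_of_mem_hull {n : ℕ} {W : Set (Fin n → ℝ)} (L : (Fin n → ℝ) →ₗ[ℝ] ℝ)
    {m : ℝ} (hW : ∀ w ∈ W, m ≤ L w) {y : Fin n → ℝ} (hy : y ∈ convexHull ℝ W) :
    m ≤ L y := by
  have : convexHull ℝ W ⊆ {z | m ≤ L z} :=
    convexHull_min hW (convex_halfSpace_ge (LinearMap.isLinear L) m)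
  exact this hy

lemma mem_faceMin_of_min {n : ℕ} {W : Set (Fin n → ℝ)} (L : (Fin n → ℝ) →ₗ[ℝ] ℝ)
    {w : Fin n → ℝ} (hw : w ∈ W) (hmin : ∀ v ∈ W, L w ≤ L v) :
    w ∈ faceMin (convexHull ℝ W) (fun x => L x) :=
  ⟨subset_convexHull ℝ W hw, fun y hy => le_of_mem_hull L hmin hy⟩

/-- Genericity criterion for the hull of a finite set: the minimizing face is a point iff
the base set has a unique minimizer. -/
lemma faceMin_singleton_iff {n : ℕ} {W : Set (Fin n → ℝ)} (hfin : W.Finite)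
    (hne : W.Nonempty) (L : (Fin n → ℝ) →ₗ[ℝ] ℝ) :
    (∃ x, faceMin (convexHull ℝ W) (fun x => L x) = {x}) ↔
      (∃! w, w ∈ W ∧ ∀ v ∈ W, L w ≤ L v) := by
  obtain ⟨w, hwW, hwmin⟩ := Set.exists_min_image W (fun x => L x) hfin hne
  constructor
  · rintro ⟨x, hx⟩
    have hxw : w = x := by
      have := mem_faceMin_of_min L hwW hwmin
      rw [hx] at this; exact this
    refine ⟨w, ⟨hwW, hwmin⟩, ?_⟩
    rintro v ⟨hvW, hvmin⟩
    have : v = x := by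
      have := mem_faceMin_of_min L hvW hvmin
      rw [hx] at this; exact this
    rw [this, hxw]
  · rintro ⟨w₀, ⟨hw₀W, hw₀min⟩, huniq⟩
    refine ⟨w₀, Set.eq_singleton_iff_unique_mem.2 ⟨mem_faceMin_of_min L hw₀W hw₀min, ?_⟩⟩
    rintro x ⟨hxhull, hxmin⟩
    -- x achieves the minimum value
    have hxval : L x = L w₀ := by
      have h1 : L x ≤ L w₀ := hxmin _ (subset_convexHull ℝ W hw₀W)
      have h2 : L w₀ ≤ L x := le_of_mem_hull L hw₀min hxhull
      linarith
    -- write x as a convex combination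
    rw [hfin.convexHull_eq] at hxhull
    obtain ⟨p, hp0, hp1, hpx⟩ := hxhull
    set T := hfin.toFinset with hT
    have hmemT : ∀ y ∈ T, y ∈ W := fun y hy => (Set.Finite.mem_toFinset hfin).1 hy
    have hxsum : x = ∑ y ∈ T, p y • y := by
      rw [← hpx, Finset.centerMass_eq_of_sum_1 _ _ hp1]; rfl
    have hLx : L x = ∑ y ∈ T, p y * L y := by
      rw [hxsum, map_sum]; simp
    have hLw : L w₀ = ∑ y ∈ T, p y * L w₀ := by
      rw [← Finset.sum_mul, hp1, one_mul]
    have hzero : ∀ y ∈ T, p y * (L y - L w₀) = 0 := by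
      have hsum0 : ∑ y ∈ T, p y * (L y - L w₀) = 0 := by
        simp only [mul_sub]
        rw [Finset.sum_sub_distrib, ← hLx, ← hLw, hxval, sub_self]
      refine (Finset.sum_eq_zero_iff_of_nonneg ?_).1 hsum0
      intro y hy
      have := hp0 y (hmemT y hy)
      have := hw₀min y (hmemT y hy)
      nlinarith [hp0 y (hmemT y hy), hw₀min y (hmemT y hy)]
    have hyw : ∀ y ∈ T, p y ≠ 0 → y = w₀ := by
      intro y hy hpy
      have h0 := hzero y hy
      have hLy : L y = L w₀ := by
        rcases mul_eq_zero.1 h0 with h | h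
        · exact absurd h hpy
        · linarith [sub_eq_zero.1 h]
      refine huniq y ⟨hmemT y hy, fun v hv => ?_⟩
      rw [hLy]; exact hw₀min v hv
    have : x = (∑ y ∈ T, p y) • w₀ := by
      rw [hxsum, Finset.sum_smul]
      refine Finset.sum_congr rfl fun y hy => ?_
      by_cases hpy : p y = 0
      · simp [hpy]
      · rw [hyw y hy hpy]
    rw [this, hp1, one_smul]

/-- The vertex set of the hypergraphic polytope. -/
noncomputable def VtxSum {n : ℕ} (𝒞 : Finset (Finset (Fin n))) : Set (Fin n → ℝ) :=
  ∑ A ∈ 𝒞, (ev '' (↑A : Set (Fin n)))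

lemma sum_smplx_eq_hull {n : ℕ} (𝒞 : Finset (Finset (Fin n))) :
    ∑ A ∈ 𝒞, smplx A = convexHull ℝ (VtxSum 𝒞) := by
  simp only [smplx_eq, VtxSum, convexHull_sum]

lemma vtxSum_finite {n : ℕ} (𝒞 : Finset (Finset (Fin n))) : (VtxSum 𝒞).Finite := by
  classical
  induction 𝒞 using Finset.cons_induction with
  | empty => simpa [VtxSum] using Set.finite_zero
  | cons A s hA ih =>
      rw [VtxSum, Finset.sum_cons]
      exact Set.Finite.add ((A.finite_toSet).image _) ih

lemma vtxSum_nonempty {n : ℕ} (𝒞 : Finset (Finset (Fin n)))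
    (h : ∀ A ∈ 𝒞, A.Nonempty) : (VtxSum 𝒞).Nonempty := by
  classical
  induction 𝒞 using Finset.cons_induction with
  | empty =>
      exact ⟨0, by simp [VtxSum, Set.mem_zero]⟩
  | cons A s hA ih =>
      rw [VtxSum, Finset.sum_cons]
      obtain ⟨j, hj⟩ := h A (Finset.mem_cons_self A s)
      obtain ⟨y, hy⟩ := ih fun B hB => h B (Finset.mem_cons.2 (Or.inr hB))
      exact ⟨ev j + y, Set.add_mem_add ⟨j, hj, rfl⟩ hy⟩

/-- The genericity criterion: `f` is generic for `∑_{A ∈ 𝒞} 𝔰_A` iff every `A ∈ 𝒞` has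
a unique `f`-minimizer. -/
lemma isGeneric_iff {n : ℕ} (𝒞 : Finset (Finset (Fin n))) (h : ∀ A ∈ 𝒞, A.Nonempty)
    (f : Fin n → ℕ) :
    IsGeneric (∑ A ∈ 𝒞, smplx A) f ↔ ∀ A ∈ 𝒞, UniqMinN f A := by
  classical
  rw [sum_smplx_eq_hull]
  have hLf : (fun x : Fin n → ℝ => ∑ i, (f i : ℝ) * x i) = fun x => LF f x := by
    funext x; rw [LF_apply]
  rw [IsGeneric, hLf, faceMin_singleton_iff (vtxSum_finite 𝒞) (vtxSum_nonempty 𝒞 h) (LF f)]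
  -- choose a minimizer `J A` of `f` on each nonempty `A`
  have hch : ∀ A : Finset (Fin n), A.Nonempty → ∃ j, j ∈ A ∧ ∀ k ∈ A, f j ≤ f k := by
    intro A hA
    obtain ⟨j, hj, hjm⟩ := A.exists_min_image f hA
    exact ⟨j, hj, hjm⟩
  choose J hJmem hJmin using hch
  set gm : Finset (Fin n) → (Fin n → ℝ) :=
    fun A => if hA : A.Nonempty then ev (J A hA) else 0 with hgm
  have hgmA : ∀ A (hA : A ∈ 𝒞), gm A = ev (J A (h A hA)) := by
    intro A hA; simp only [hgm, dif_pos (h A hA)]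
  set b : Fin n → ℝ := ∑ A ∈ 𝒞, gm A with hb
  have hgm_mem : ∀ A ∈ 𝒞, gm A ∈ ev '' (↑A : Set (Fin n)) := by
    intro A hA
    rw [hgmA A hA]
    exact ⟨J A (h A hA), by simpa using hJmem A (h A hA), rfl⟩
  have hbW : b ∈ VtxSum 𝒞 := by
    rw [VtxSum, Set.mem_finset_sum]
    exact ⟨gm, fun {A} hA => hgm_mem A hA, rfl⟩
  -- each `gm A` minimizes `LF f` on the vertices of `𝔰_A`
  have hgm_min : ∀ A ∈ 𝒞, ∀ v ∈ ev '' (↑A : Set (Fin n)), LF f (gm A) ≤ LF f v := by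
    rintro A hA v ⟨k, hk, rfl⟩
    rw [hgmA A hA, LF_ev, LF_ev]
    exact_mod_cast hJmin A (h A hA) k (by simpa using hk)
  have hb_min : ∀ v ∈ VtxSum 𝒞, LF f b ≤ LF f v := by
    intro v hv
    rw [VtxSum, Set.mem_finset_sum] at hv
    obtain ⟨g, hg, rfl⟩ := hv
    rw [hb, map_sum, map_sum]
    exact Finset.sum_le_sum fun A hA => hgm_min A hA (g A) (hg hA)
  constructor
  · rintro ⟨w, ⟨hwW, hwmin⟩, huniq⟩ A₀ hA₀
    refine ⟨J A₀ (h A₀ hA₀), ⟨hJmem A₀ (h A₀ hA₀), hJmin A₀ (h A₀ hA₀)⟩, ?_⟩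
    rintro k ⟨hkA, hkmin⟩
    -- swap in `k` at position `A₀`
    set g' : Finset (Fin n) → (Fin n → ℝ) := Function.update gm A₀ (ev k) with hg'
    have hg'_mem : ∀ A ∈ 𝒞, g' A ∈ ev '' (↑A : Set (Fin n)) := by
      intro A hA
      by_cases hAA : A = A₀
      · subst hAA; rw [hg', Function.update_self]; exact ⟨k, by simpa using hkA, rfl⟩
      · rw [hg', Function.update_of_ne hAA]; exact hgm_mem A hA
    set b' : Fin n → ℝ := ∑ A ∈ 𝒞, g' A with hb'
    have hb'W : b' ∈ VtxSum 𝒞 := by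
      rw [VtxSum, Set.mem_finset_sum]
      exact ⟨g', fun {A} hA => hg'_mem A hA, rfl⟩
    have hfk : f k = f (J A₀ (h A₀ hA₀)) :=
      le_antisymm (hkmin _ (hJmem A₀ (h A₀ hA₀))) (hJmin A₀ (h A₀ hA₀) k hkA)
    have hsplit : b = gm A₀ + ∑ A ∈ 𝒞.erase A₀, gm A := by
      rw [hb, Finset.add_sum_erase _ _ hA₀]
    have hsplit' : b' = ev k + ∑ A ∈ 𝒞.erase A₀, gm A := by
      rw [hb', ← Finset.add_sum_erase _ _ hA₀, hg', Function.update_self]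
      congr 1
      refine Finset.sum_congr rfl fun A hA => ?_
      exact Function.update_of_ne (Finset.ne_of_mem_erase hA) _ _
    have hLb' : LF f b' = LF f b := by
      rw [hsplit, hsplit', map_add, map_add, hgmA A₀ hA₀, LF_ev, LF_ev, hfk]
    have hb'min : ∀ v ∈ VtxSum 𝒞, LF f b' ≤ LF f v := by
      intro v hv; rw [hLb']; exact hb_min v hv
    have h1 : b = w := huniq b ⟨hbW, hb_min⟩
    have h2 : b' = w := huniq b' ⟨hb'W, hb'min⟩
    have : ev k = ev (J A₀ (h A₀ hA₀)) := by
      have heq : b' = b := h2.trans h1.symm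
      rw [hsplit, hsplit', hgmA A₀ hA₀] at heq
      exact add_right_cancel heq
    exact ev_injective this
  · intro hU
    refine ⟨b, ⟨hbW, hb_min⟩, ?_⟩
    rintro x ⟨hxW, hxmin⟩
    rw [VtxSum, Set.mem_finset_sum] at hxW
    obtain ⟨g, hg, rfl⟩ := hxW
    have hg' : ∀ A, A ∈ 𝒞 → g A ∈ ev '' (↑A : Set (Fin n)) := fun A hA => hg hA
    choose kk hkk hevkk using hg'
    have hle : ∀ A ∈ 𝒞, LF f (gm A) ≤ LF f (g A) :=
      fun A hA => hgm_min A hA (g A) (hg hA)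
    have hsum_eq : ∑ A ∈ 𝒞, LF f (gm A) = ∑ A ∈ 𝒞, LF f (g A) := by
      have h1 : LF f (∑ A ∈ 𝒞, g A) ≤ LF f b := hxmin b hbW
      have h2 : LF f b ≤ LF f (∑ A ∈ 𝒞, g A) :=
        hb_min _ (by rw [VtxSum, Set.mem_finset_sum]; exact ⟨g, fun {A} hA => hg hA, rfl⟩)
      have h3 : LF f b = LF f (∑ A ∈ 𝒞, g A) := le_antisymm h2 h1
      rw [hb, map_sum, map_sum] at h3
      exact h3
    have heach : ∀ A ∈ 𝒞, LF f (gm A) = LF f (g A) :=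
      (Finset.sum_eq_sum_iff_of_le hle).1 hsum_eq
    refine Finset.sum_congr rfl fun A hA => ?_
    have hA' := h A hA
    have hval : (f (J A hA') : ℝ) = f (kk A hA) := by
      have := heach A hA
      rwa [hgmA A hA, ← hevkk A hA, LF_ev, LF_ev] at this
    have hfval : f (kk A hA) = f (J A hA') := by exact_mod_cast hval.symm
    have hkmin : ∀ m ∈ A, f (kk A hA) ≤ f m := by
      intro m hm; rw [hfval]; exact hJmin A hA' m hm
    obtain ⟨c, _, hc⟩ := hU A hA
    have e1 : kk A hA = c := hc _ ⟨by simpa using hkk A hA, hkmin⟩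
    have e2 : J A hA' = c := hc _ ⟨hJmem A hA', hJmin A hA'⟩
    rw [← hevkk A hA, hgmA A hA, e1, e2]

/-- Inclusion-exclusion over subsets of a nonempty finset, rational version. -/
lemma sum_powerset_neg_one_pow_card_rat {α : Type*} {s : Finset α} (hs : s.Nonempty) :
    ∑ t ∈ s.powerset, (-1 : ℚ) ^ t.card = 0 := by
  have := Finset.sum_powerset_neg_one_pow_card_of_nonempty (x := s) hs
  exact_mod_cast congrArg (fun z : ℤ => (z : ℚ)) this


/-- Classical rational indicator. -/
noncomputable def indQ (p : Prop) : ℚ := if p then 1 else 0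

lemma indQ_of_true {p : Prop} (h : p) : indQ p = 1 := by simp [indQ, h]

lemma indQ_of_false {p : Prop} (h : ¬ p) : indQ p = 0 := by simp [indQ, h]

lemma indQ_congr {p q : Prop} (h : p ↔ q) : indQ p = indQ q := by rw [propext h]

lemma sum_indQ {α : Type*} (s : Finset α) (p : α → Prop) [DecidablePred p] :
    ∑ x ∈ s, indQ (p x) = ((s.filter p).card : ℚ) := by
  rw [Finset.card_eq_sum_ones, Nat.cast_sum, Finset.sum_filter]
  refine Finset.sum_congr rfl fun x _ => ?_
  by_cases h : p x <;> simp [indQ, h]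

/-- **modular relations on hypergraphic polytopes.** Let `𝒜, ℬ` be disjoint
families of nonempty subsets of `[n]` and `𝔮 = ∑_{A ∈ 𝒜} 𝔰_A`. If every set composition of
`[n]` (equivalently, every coloring `f : [n] → ℕ`) lies in `𝒦 ∪ 𝒥` — i.e. either some
`A ∈ 𝒜` has non-singleton minima, or some `B ∈ ℬ` has singleton minima — then
`∑_{𝒯 ⊆ ℬ} (−1)^{#𝒯} Ψ(𝔮 + ∑_{T ∈ 𝒯} 𝔰_T) = 0`. -/
theorem stmt17 {n : ℕ} (𝒜 ℬ : Finset (Finset (Fin n)))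
    (hd : Disjoint 𝒜 ℬ) (h𝒜 : ∀ A ∈ 𝒜, A.Nonempty) (hℬ : ∀ B ∈ ℬ, B.Nonempty)
    (hcover : ∀ f : Fin n → ℕ,
      (∃ A ∈ 𝒜, ¬ UniqMinN f A) ∨ ∃ B ∈ ℬ, UniqMinN f B) :
    ∑ 𝒯 ∈ ℬ.powerset, ((-1 : ℚ) ^ 𝒯.card) •
        chromQ ((∑ A ∈ 𝒜, smplx A) + ∑ T ∈ 𝒯, smplx T) = 0 := by
  classical
  apply MvPowerSeries.ext
  intro d
  rw [map_sum, map_zero]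
  simp only [map_smul, smul_eq_mul]
  -- the finite set of candidate colorings
  set 𝔽 : Finset (Fin n → ℕ) := Fintype.piFinset (fun _ : Fin n => d.support) with h𝔽
  set CNT : (Fin n → ℕ) → Prop :=
    fun f => ∀ c : ℕ, Nat.card {i : Fin n // f i = c} = d c with hCNT
  have hmem𝔽 : ∀ f : Fin n → ℕ, CNT f → f ∈ 𝔽 := by
    intro f hf
    rw [h𝔽, Fintype.mem_piFinset]
    intro i
    have hne : Nonempty {i' : Fin n // f i' = f i} := ⟨⟨i, rfl⟩⟩
    have h1 : 0 < Nat.card {i' : Fin n // f i' = f i} := Nat.card_pos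
    rw [hf (f i)] at h1
    exact Finsupp.mem_support_iff.2 h1.ne'
  -- counting via the finite candidate set
  have hNat : ∀ (Q : (Fin n → ℕ) → Prop), (∀ f, Q f → CNT f) →
      (Nat.card {f : Fin n → ℕ // Q f} : ℚ) = ∑ f ∈ 𝔽, indQ (Q f) := by
    intro Q hQ
    have hset : {f : Fin n → ℕ | Q f} = ↑(𝔽.filter Q) := by
      ext f
      simp only [Set.mem_setOf_eq, Finset.coe_filter, Set.mem_setOf_eq]
      exact ⟨fun hh => ⟨hmem𝔽 f (hQ f hh), hh⟩, fun hh => hh.2⟩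
    have h1 : Nat.card {f : Fin n → ℕ // Q f} = ({f : Fin n → ℕ | Q f}).ncard :=
      Nat.card_coe_set_eq _
    rw [h1, hset, Set.ncard_coe_finset, sum_indQ]
  -- compute each coefficient
  have hterm : ∀ 𝒯 ∈ ℬ.powerset,
      (MvPowerSeries.coeff d) (chromQ ((∑ A ∈ 𝒜, smplx A) + ∑ T ∈ 𝒯, smplx T)) =
        ∑ f ∈ 𝔽, indQ (((∀ A ∈ 𝒜, UniqMinN f A) ∧ (∀ T ∈ 𝒯, UniqMinN f T)) ∧ CNT f) := by
    intro 𝒯 h𝒯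
    have h𝒯ℬ : 𝒯 ⊆ ℬ := Finset.mem_powerset.1 h𝒯
    have hdisj : Disjoint 𝒜 𝒯 := hd.mono_right h𝒯ℬ
    have hP : (∑ A ∈ 𝒜, smplx A) + ∑ T ∈ 𝒯, smplx T = ∑ A ∈ 𝒜 ∪ 𝒯, smplx A :=
      (Finset.sum_union hdisj).symm
    have hne : ∀ A ∈ 𝒜 ∪ 𝒯, A.Nonempty := by
      intro A hA
      rcases Finset.mem_union.1 hA with hA | hA
      · exact h𝒜 A hA
      · exact hℬ A (h𝒯ℬ hA)
    have hiff : ∀ f : Fin n → ℕ,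
        (IsGeneric ((∑ A ∈ 𝒜, smplx A) + ∑ T ∈ 𝒯, smplx T) f ∧ CNT f) ↔
          (((∀ A ∈ 𝒜, UniqMinN f A) ∧ (∀ T ∈ 𝒯, UniqMinN f T)) ∧ CNT f) := by
      intro f
      rw [hP, isGeneric_iff _ hne, Finset.forall_mem_union]
    have hc : (MvPowerSeries.coeff d) (chromQ ((∑ A ∈ 𝒜, smplx A) + ∑ T ∈ 𝒯, smplx T)) =
        (Nat.card {f : Fin n → ℕ //
          IsGeneric ((∑ A ∈ 𝒜, smplx A) + ∑ T ∈ 𝒯, smplx T) f ∧ CNT f} : ℚ) := rfl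
    rw [hc, hNat (fun f => IsGeneric ((∑ A ∈ 𝒜, smplx A) + ∑ T ∈ 𝒯, smplx T) f ∧ CNT f)
      (fun f hf => hf.2)]
    exact Finset.sum_congr rfl fun f _ => indQ_congr (hiff f)
  calc ∑ 𝒯 ∈ ℬ.powerset, (-1 : ℚ) ^ 𝒯.card *
        (MvPowerSeries.coeff d) (chromQ ((∑ A ∈ 𝒜, smplx A) + ∑ T ∈ 𝒯, smplx T))
      = ∑ f ∈ 𝔽, ∑ 𝒯 ∈ ℬ.powerset, (-1 : ℚ) ^ 𝒯.card *
          indQ (((∀ A ∈ 𝒜, UniqMinN f A) ∧ (∀ T ∈ 𝒯, UniqMinN f T)) ∧ CNT f) := by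
        rw [Finset.sum_comm]
        refine Finset.sum_congr rfl fun 𝒯 h𝒯 => ?_
        rw [hterm 𝒯 h𝒯, Finset.mul_sum]
    _ = 0 := by
        rw [Finset.sum_eq_zero]
        intro f _
        by_cases hf : (∀ A ∈ 𝒜, UniqMinN f A) ∧ CNT f
        · -- the alternating sum over subsets of the nonempty `ℬf` vanishes
          set ℬf : Finset (Finset (Fin n)) := ℬ.filter (fun B => UniqMinN f B) with hℬf
          have hcond : ∀ 𝒯 ∈ ℬ.powerset,
              ((((∀ A ∈ 𝒜, UniqMinN f A) ∧ (∀ T ∈ 𝒯, UniqMinN f T)) ∧ CNT f)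
                ↔ 𝒯 ⊆ ℬf) := by
            intro 𝒯 h𝒯
            have h𝒯ℬ : 𝒯 ⊆ ℬ := Finset.mem_powerset.1 h𝒯
            constructor
            · rintro ⟨⟨-, hT⟩, -⟩ B hB
              exact Finset.mem_filter.2 ⟨h𝒯ℬ hB, hT B hB⟩
            · intro hsub
              exact ⟨⟨hf.1, fun T hT => (Finset.mem_filter.1 (hsub hT)).2⟩, hf.2⟩
          have hstep : ∑ 𝒯 ∈ ℬ.powerset, (-1 : ℚ) ^ 𝒯.card *
              indQ (((∀ A ∈ 𝒜, UniqMinN f A) ∧ (∀ T ∈ 𝒯, UniqMinN f T)) ∧ CNT f)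
              = ∑ 𝒯 ∈ ℬ.powerset, (if 𝒯 ⊆ ℬf then (-1 : ℚ) ^ 𝒯.card else 0) := by
            refine Finset.sum_congr rfl fun 𝒯 h𝒯 => ?_
            rw [indQ_congr (hcond 𝒯 h𝒯)]
            by_cases hsub : 𝒯 ⊆ ℬf
            · rw [indQ_of_true hsub, if_pos hsub, mul_one]
            · rw [indQ_of_false hsub, if_neg hsub, mul_zero]
          rw [hstep, ← Finset.sum_filter]
          have hpow : ℬ.powerset.filter (fun 𝒯 => 𝒯 ⊆ ℬf) = ℬf.powerset := by
            ext 𝒯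
            simp only [Finset.mem_filter, Finset.mem_powerset]
            exact ⟨fun hh => hh.2, fun hh => ⟨hh.trans (Finset.filter_subset _ _), hh⟩⟩
          rw [hpow]
          have hℬfne : ℬf.Nonempty := by
            rcases hcover f with ⟨A, hA, hnA⟩ | ⟨B, hB, hUB⟩
            · exact absurd (hf.1 A hA) hnA
            · exact ⟨B, Finset.mem_filter.2 ⟨hB, hUB⟩⟩
          exact sum_powerset_neg_one_pow_card_rat hℬfne
        · rw [Finset.sum_eq_zero]
          intro 𝒯 _
          have : ¬ (((∀ A ∈ 𝒜, UniqMinN f A) ∧ (∀ T ∈ 𝒯, UniqMinN f T)) ∧ CNT f) := by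
            rintro ⟨⟨hA, -⟩, hC⟩; exact hf ⟨hA, hC⟩
          rw [indQ_of_false this, mul_zero]
end

section
/- For set compositions of [n], define 𝔭^π⃗ = Σ_{A : #A_π⃗ = 1} 𝔰_A (the basic hypergraphic polytope of π⃗). Then for set compositions π⃗, τ⃗, the face of 𝔭^π⃗ corresponding to a coloring of composition type τ⃗ is a point if and only if π⃗ ⪯ τ⃗ in the SC preorder; consequently Υ(𝔭^π⃗) = Σ_{τ⃗ ⪰ π⃗} M_τ⃗ in the monomial basis of word quasisymmetric functions. -/
open Pointwise
open scoped Classical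

/-- A function `g : Fin n → Fin n` is *packed* if its set of used colors is a lower set;
packed functions encode exactly the set compositions of `[n]` (the blocks, in order, are the
level sets of `g`). -/
def IsPacked {n : ℕ} (g : Fin n → Fin n) : Prop :=
  ∀ c : Fin n, (∃ i, g i = c) → ∀ d : Fin n, d ≤ c → ∃ i, g i = d

/-- Set compositions of `[n]`, encoded as packed functions. -/
abbrev SetComp (n : ℕ) := {g : Fin n → Fin n // IsPacked g}

/-- The set of minima `A_π⃗` of `A` in the set composition encoded by `g` is a singleton. -/
def UniqMin {n : ℕ} (g : Fin n → Fin n) (A : Finset (Fin n)) : Prop :=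
  ∃! j, j ∈ A ∧ ∀ k ∈ A, g j ≤ g k

/-- The SC preorder: `π ⪯ τ` iff `#A_π⃗ = 1` implies `#A_τ⃗ = 1` for all nonempty `A`. -/
def SCle {n : ℕ} (π τ : SetComp n) : Prop :=
  ∀ A : Finset (Fin n), A.Nonempty → UniqMin π.1 A → UniqMin τ.1 A

/-- The basic hypergraphic polytope `𝔭^π⃗ = ∑_{A : #A_π⃗ = 1} 𝔰_A`. -/
noncomputable def basicHP {n : ℕ} (π : SetComp n) : Set (Fin n → ℝ) :=
  ∑ A ∈ Finset.univ.filter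
      (fun A : Finset (Fin n) => A.Nonempty ∧ UniqMin π.1 A), smplx A

lemma mem_smplx {n : ℕ} {A : Finset (Fin n)} {x : Fin n → ℝ} :
    x ∈ smplx A ↔ (∀ i, 0 ≤ x i) ∧ (∀ i ∉ A, x i = 0) ∧ ∑ i, x i = 1 := by
  constructor
  · intro hx
    have hconv : Convex ℝ {x : Fin n → ℝ |
        (∀ i, 0 ≤ x i) ∧ (∀ i ∉ A, x i = 0) ∧ ∑ i, x i = 1} := by
      intro u hu v hv a b ha hb hab
      refine ⟨fun i => add_nonneg (mul_nonneg ha (hu.1 i)) (mul_nonneg hb (hv.1 i)),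
        fun i hi => by simp [Pi.add_apply, hu.2.1 i hi, hv.2.1 i hi], ?_⟩
      simp only [Pi.add_apply, Pi.smul_apply, smul_eq_mul]
      rw [Finset.sum_add_distrib, ← Finset.mul_sum, ← Finset.mul_sum, hu.2.2, hv.2.2]
      simpa using hab
    refine convexHull_min ?_ hconv hx
    rintro _ ⟨j, hj, rfl⟩
    refine ⟨fun i => ?_, fun i hi => ?_, ?_⟩
    · simp only [Pi.single_apply]; positivity
    · simp only [Pi.single_apply]; rw [if_neg]; rintro rfl; exact hi (by simpa using hj)
    · simp [Pi.single_apply]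
  · rintro ⟨h0, hA, hs⟩
    have hsum' : ∑ j ∈ A, x j = 1 := by
      rw [← hs]
      exact Finset.sum_subset A.subset_univ (fun i _ hi => hA i hi)
    have hmem := A.centerMass_mem_convexHull (w := x)
      (z := fun j => Pi.single j (1 : ℝ)) (fun i _ => h0 i)
      (by rw [hsum']; norm_num) (fun i hi => Set.mem_image_of_mem _ hi)
    have heq : A.centerMass x (fun j => Pi.single j (1 : ℝ)) = x := by
      rw [Finset.centerMass_eq_of_sum_1 _ _ hsum']
      funext i
      simp only [Finset.sum_apply, Pi.smul_apply, Pi.single_apply, smul_eq_mul]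
      simp only [mul_ite, mul_one, mul_zero]
      rw [Finset.sum_ite_eq]
      by_cases hi : i ∈ A
      · simp [hi]
      · simp [hi, hA i hi]
    rwa [heq] at hmem

def UniqMinW {n : ℕ} (w : Fin n → ℕ) (A : Finset (Fin n)) : Prop :=
  ∃! j, j ∈ A ∧ ∀ k ∈ A, w j ≤ w k

noncomputable def Fw {n : ℕ} (w : Fin n → ℕ) (x : Fin n → ℝ) : ℝ := ∑ i, (w i : ℝ) * x i

lemma Fw_single {n : ℕ} (w : Fin n → ℕ) (j : Fin n) : Fw w (Pi.single j 1) = w j := by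
  unfold Fw
  simp only [Pi.single_apply, mul_ite, mul_one, mul_zero]
  simp

lemma single_mem_smplx {n : ℕ} {A : Finset (Fin n)} {j : Fin n} (hj : j ∈ A) :
    Pi.single j (1 : ℝ) ∈ smplx A := by
  rw [mem_smplx]
  refine ⟨fun i => ?_, fun i hi => ?_, ?_⟩
  · simp only [Pi.single_apply]; positivity
  · simp only [Pi.single_apply]; rw [if_neg]; rintro rfl; exact hi hj
  · simp [Pi.single_apply]

lemma Fw_min_smplx {n : ℕ} {w : Fin n → ℕ} {A : Finset (Fin n)} {j : Fin n}
    (hj : j ∈ A) (hmin : ∀ k ∈ A, w j ≤ w k) {x : Fin n → ℝ} (hx : x ∈ smplx A) :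
    (w j : ℝ) ≤ Fw w x := by
  rw [mem_smplx] at hx
  obtain ⟨h0, hA, hs⟩ := hx
  calc (w j : ℝ) = ∑ i, (w j : ℝ) * x i := by rw [← Finset.mul_sum, hs, mul_one]
    _ ≤ ∑ i, (w i : ℝ) * x i := by
        refine Finset.sum_le_sum fun i _ => ?_
        by_cases hi : i ∈ A
        · exact mul_le_mul_of_nonneg_right (by exact_mod_cast hmin i hi) (h0 i)
        · rw [hA i hi]; simp
    _ = Fw w x := rfl

lemma Fw_eq_min_smplx {n : ℕ} {w : Fin n → ℕ} {A : Finset (Fin n)} {j : Fin n}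
    (hj : j ∈ A) (hmin : ∀ k ∈ A, w j ≤ w k)
    (huniq : ∀ k, (k ∈ A ∧ ∀ l ∈ A, w k ≤ w l) → k = j)
    {x : Fin n → ℝ} (hx : x ∈ smplx A) (heq : Fw w x ≤ (w j : ℝ)) :
    x = Pi.single j 1 := by
  have hx' := hx
  rw [mem_smplx] at hx'
  obtain ⟨h0, hA, hs⟩ := hx'
  have hFeq : Fw w x = (w j : ℝ) := le_antisymm heq (Fw_min_smplx hj hmin hx)
  have hzero : ∑ i, ((w i : ℝ) - w j) * x i = 0 := by
    have : ∑ i, ((w i : ℝ) - w j) * x i = Fw w x - ∑ i, (w j : ℝ) * x i := by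
      unfold Fw; rw [← Finset.sum_sub_distrib]; congr 1; funext i; ring
    rw [this, ← Finset.mul_sum, hs, mul_one, hFeq, sub_self]
  have hterm : ∀ i ∈ Finset.univ, ((w i : ℝ) - w j) * x i = 0 := by
    rw [← Finset.sum_eq_zero_iff_of_nonneg]
    · exact hzero
    · intro i _
      by_cases hi : i ∈ A
      · have : (w j : ℝ) ≤ w i := by exact_mod_cast hmin i hi
        exact mul_nonneg (by linarith) (h0 i)
      · rw [hA i hi, mul_zero]
  have hsupp : ∀ i, i ≠ j → x i = 0 := by
    intro i hij
    by_contra hxi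
    have hiA : i ∈ A := by by_contra h; exact hxi (hA i h)
    have := hterm i (Finset.mem_univ i)
    rcases mul_eq_zero.1 this with h | h
    · have hwi : (w i : ℝ) = w j := by linarith [sub_eq_zero.1 h]
      have hwi' : w i = w j := by exact_mod_cast hwi
      exact hij (huniq i ⟨hiA, fun l hl => hwi' ▸ hmin l hl⟩)
    · exact hxi h
  have hxj : x j = 1 := by
    rw [← hs, Finset.sum_eq_single j (fun b _ hb => hsupp b hb)
      (fun h => absurd (Finset.mem_univ j) h)]
  funext i
  by_cases hij : i = j
  · subst hij; simp [hxj]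
  · rw [hsupp i hij, Pi.single_apply, if_neg hij]

lemma Fw_sum {n : ℕ} (w : Fin n → ℕ) {ι : Type*} (s : Finset ι) (g : ι → (Fin n → ℝ)) :
    Fw w (∑ A ∈ s, g A) = ∑ A ∈ s, Fw w (g A) := by
  unfold Fw
  rw [Finset.sum_comm]
  congr 1; funext i
  rw [Finset.sum_apply, Finset.mul_sum]

lemma point_iff {n : ℕ} (π : SetComp n) (w : Fin n → ℕ) :
    (∃ x : Fin n → ℝ, faceMin (basicHP π) (Fw w) = {x}) ↔
      ∀ A ∈ Finset.univ.filter
        (fun A : Finset (Fin n) => A.Nonempty ∧ UniqMin π.1 A), UniqMinW w A := by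
  set C := Finset.univ.filter
      (fun A : Finset (Fin n) => A.Nonempty ∧ UniqMin π.1 A) with hC
  have hne : ∀ A ∈ C, A.Nonempty := fun A hA => (Finset.mem_filter.1 hA).2.1
  have hjm : ∀ A, A ∈ C → ∃ j, j ∈ A ∧ ∀ k ∈ A, w j ≤ w k := fun A hA =>
    A.exists_min_image w (hne A hA)
  choose jm hjm1 hjm2 using hjm
  set g : Finset (Fin n) → (Fin n → ℝ) :=
    fun A => if h : A ∈ C then Pi.single (jm A h) 1 else 0 with hg
  set m : Finset (Fin n) → ℝ :=
    fun A => if h : A ∈ C then ((w (jm A h)) : ℝ) else 0 with hm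
  have hgA : ∀ A (h : A ∈ C), g A = Pi.single (jm A h) 1 := fun A h => dif_pos h
  have hmA : ∀ A (h : A ∈ C), m A = ((w (jm A h)) : ℝ) := fun A h => dif_pos h
  have hFg : ∀ A ∈ C, Fw w (g A) = m A := by
    intro A h; rw [hgA A h, hmA A h, Fw_single]
  have hgmem : ∀ A ∈ C, g A ∈ smplx A := by
    intro A h; rw [hgA A h]; exact single_mem_smplx (hjm1 A h)
  -- lower bound on all of basicHP
  have hlow : ∀ y ∈ basicHP π, ∑ A ∈ C, m A ≤ Fw w y := by
    intro y hy
    rw [basicHP, ← hC, Set.mem_finset_sum] at hy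
    obtain ⟨h, hmem, rfl⟩ := hy
    rw [Fw_sum]
    refine Finset.sum_le_sum fun A hA => ?_
    rw [hmA A hA]
    exact Fw_min_smplx (hjm1 A hA) (hjm2 A hA) (hmem hA)
  -- any selection of simplex points summing with minimal value is in faceMin
  have hinface : ∀ h : Finset (Fin n) → (Fin n → ℝ), (∀ A ∈ C, h A ∈ smplx A) →
      (∀ A ∈ C, Fw w (h A) = m A) → (∑ A ∈ C, h A) ∈ faceMin (basicHP π) (Fw w) := by
    intro h hmem hval
    constructor
    · rw [basicHP, ← hC, Set.mem_finset_sum]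
      exact ⟨h, fun {A} hA => hmem A hA, rfl⟩
    · intro y hy
      rw [Fw_sum, Finset.sum_congr rfl hval]
      exact hlow y hy
  constructor
  · -- point → unique minimizers
    rintro ⟨x, hx⟩ A0 hA0
    by_contra hnu
    obtain ⟨k, hk, hkj⟩ : ∃ k, (k ∈ A0 ∧ ∀ l ∈ A0, w k ≤ w l) ∧ k ≠ jm A0 hA0 := by
      by_contra hall
      push_neg at hall
      exact hnu ⟨jm A0 hA0, ⟨hjm1 A0 hA0, hjm2 A0 hA0⟩, hall⟩
    set g' : Finset (Fin n) → (Fin n → ℝ) := Function.update g A0 (Pi.single k 1) with hg'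
    have hwk : w k = w (jm A0 hA0) := le_antisymm (hk.2 _ (hjm1 A0 hA0)) (hjm2 A0 hA0 k hk.1)
    have hz1 : (∑ A ∈ C, g A) ∈ faceMin (basicHP π) (Fw w) := hinface g hgmem hFg
    have hz2 : (∑ A ∈ C, g' A) ∈ faceMin (basicHP π) (Fw w) := by
      refine hinface g' (fun A hA => ?_) (fun A hA => ?_)
      · by_cases hAA : A = A0
        · subst hAA; rw [hg', Function.update_self]; exact single_mem_smplx hk.1
        · rw [hg', Function.update_of_ne hAA]; exact hgmem A hA
      · by_cases hAA : A = A0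
        · subst hAA; rw [hg', Function.update_self, Fw_single, hmA A hA, hwk]
        · rw [hg', Function.update_of_ne hAA]; exact hFg A hA
    have h1 : (∑ A ∈ C, g A) = x := by rw [hx] at hz1; exact hz1
    have h2 : (∑ A ∈ C, g' A) = x := by rw [hx] at hz2; exact hz2
    have hdiff : (∑ A ∈ C, g A) - (∑ A ∈ C, g' A) = g A0 - g' A0 := by
      rw [← Finset.sum_sub_distrib]
      rw [Finset.sum_eq_single A0 (fun B _ hB => by rw [hg', Function.update_of_ne hB, sub_self])
        (fun hc => absurd hA0 hc)]
    rw [h1, h2, sub_self] at hdiff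
    have : (0 : Fin n → ℝ) (jm A0 hA0) = (g A0 - g' A0) (jm A0 hA0) := by rw [hdiff]
    rw [hgA A0 hA0, hg'] at this
    simp only [Function.update_self, Pi.zero_apply, Pi.sub_apply, Pi.single_apply] at this
    rw [if_neg (Ne.symm hkj)] at this
    norm_num at this
  · -- unique minimizers → point
    intro huniq
    refine ⟨∑ A ∈ C, g A, ?_⟩
    ext z
    simp only [Set.mem_singleton_iff]
    constructor
    · rintro ⟨hzmem, hzmin⟩
      have hz := hzmem
      rw [basicHP, ← hC, Set.mem_finset_sum] at hz
      obtain ⟨h, hmem, rfl⟩ := hz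
      have hle : Fw w (∑ A ∈ C, h A) ≤ ∑ A ∈ C, m A := by
        have := hzmin _ (hinface g hgmem hFg).1
        rw [Fw_sum w C g, Finset.sum_congr rfl hFg] at this
        exact this
      rw [Fw_sum] at hle
      have hge : ∀ A ∈ C, m A ≤ Fw w (h A) := fun A hA => by
        rw [hmA A hA]; exact Fw_min_smplx (hjm1 A hA) (hjm2 A hA) (hmem hA)
      have heach : ∀ A ∈ C, Fw w (h A) = m A := by
        have hsum : ∑ A ∈ C, m A = ∑ A ∈ C, Fw w (h A) :=
          le_antisymm (Finset.sum_le_sum hge) hle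
        intro A hA
        by_contra hne'
        have hlt : m A < Fw w (h A) := lt_of_le_of_ne (hge A hA) (Ne.symm hne')
        have := Finset.sum_lt_sum hge ⟨A, hA, hlt⟩
        linarith
      refine Finset.sum_congr rfl (fun A hA => ?_)
      rw [hgA A hA]
      refine Fw_eq_min_smplx (hjm1 A hA) (hjm2 A hA) ?_ (hmem hA) ?_
      · intro k hk'
        obtain ⟨j0, hj0, hj0u⟩ := huniq A hA
        rw [hj0u k hk', hj0u (jm A hA) ⟨hjm1 A hA, hjm2 A hA⟩]
      · rw [heach A hA, hmA A hA]
    · rintro rfl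
      exact hinface g hgmem hFg

noncomputable def packVal {n : ℕ} (w : Fin n → ℕ) (i : Fin n) : ℕ :=
  ((Finset.univ.image w).filter (· < w i)).card

lemma packVal_lt {n : ℕ} (w : Fin n → ℕ) (i : Fin n) : packVal w i < n := by
  have h1 : (Finset.univ.image w).filter (· < w i) ⊂ Finset.univ.image w := by
    refine Finset.ssubset_iff_of_subset (Finset.filter_subset _ _) |>.2 ?_
    exact ⟨w i, Finset.mem_image_of_mem w (Finset.mem_univ i), by simp⟩
  calc packVal w i < (Finset.univ.image w).card := Finset.card_lt_card h1
    _ ≤ (Finset.univ : Finset (Fin n)).card := Finset.card_image_le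
    _ = n := by simp

lemma packVal_le_iff {n : ℕ} (w : Fin n → ℕ) (i j : Fin n) :
    packVal w i ≤ packVal w j ↔ w i ≤ w j := by
  constructor
  · intro h
    by_contra hw
    push_neg at hw
    have : packVal w j < packVal w i := by
      refine Finset.card_lt_card ?_
      rw [Finset.ssubset_iff_of_subset
        (Finset.monotone_filter_right _ (fun v _ hv => lt_trans hv hw))]
      exact ⟨w j, Finset.mem_filter.2 ⟨Finset.mem_image_of_mem w (Finset.mem_univ j), hw⟩,
        by simp⟩
    omega
  · intro h
    exact Finset.card_le_card (Finset.monotone_filter_right _ (fun v _ hv => lt_of_lt_of_le hv h))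

noncomputable def pack {n : ℕ} (w : Fin n → ℕ) : Fin n → Fin n :=
  fun i => ⟨packVal w i, packVal_lt w i⟩

lemma pack_le_iff {n : ℕ} (w : Fin n → ℕ) (i j : Fin n) :
    pack w i ≤ pack w j ↔ w i ≤ w j := by
  rw [pack, Fin.mk_le_mk]; exact packVal_le_iff w i j

lemma packVal_surj {n : ℕ} (w : Fin n → ℕ) :
    ∀ c : ℕ, ∀ i : Fin n, packVal w i = c → ∀ d ≤ c, ∃ j, packVal w j = d := by
  intro c
  induction c using Nat.strong_induction_on with
  | _ c IH =>
    intro i hi d hd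
    rcases eq_or_lt_of_le hd with rfl | hdc
    · exact ⟨i, hi⟩
    · -- find j with packVal w j = c - 1
      have hc1 : 1 ≤ c := by omega
      have hfne : ((Finset.univ.image w).filter (· < w i)).Nonempty := by
        rw [← Finset.card_pos]
        unfold packVal at hi; omega
      set v := ((Finset.univ.image w).filter (· < w i)).max' hfne with hv
      have hvmem := ((Finset.univ.image w).filter (· < w i)).max'_mem hfne
      rw [Finset.mem_filter, Finset.mem_image] at hvmem
      obtain ⟨⟨j, _, hj⟩, hvlt⟩ := hvmem
      have hfeq : (Finset.univ.image w).filter (· < w j) =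
          ((Finset.univ.image w).filter (· < w i)).erase v := by
        ext u
        rw [Finset.mem_erase, Finset.mem_filter, Finset.mem_filter]
        constructor
        · rintro ⟨hu, hult⟩
          exact ⟨by omega, hu, by omega⟩
        · rintro ⟨hune, hu, hult⟩
          have hmem : u ∈ (Finset.univ.image w).filter (· < w i) :=
            Finset.mem_filter.2 ⟨hu, hult⟩
          have := Finset.le_max' _ u hmem
          exact ⟨hu, by omega⟩
      have hvmem' : v ∈ (Finset.univ.image w).filter (· < w i) :=
        ((Finset.univ.image w).filter (· < w i)).max'_mem hfne
      have hjval : packVal w j = c - 1 := by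
        rw [packVal, hfeq, Finset.card_erase_of_mem hvmem']
        unfold packVal at hi; omega
      exact IH (c - 1) (by omega) j hjval d (by omega)

lemma pack_isPacked {n : ℕ} (w : Fin n → ℕ) : IsPacked (pack w) := by
  rintro c ⟨i, hi⟩ d hd
  have hd' : (d : ℕ) ≤ packVal w i := by
    have : pack w i = c := hi
    rw [← this] at hd
    exact hd
  obtain ⟨j, hj⟩ := packVal_surj w (packVal w i) i rfl d hd'
  exact ⟨j, Fin.ext hj⟩

lemma packed_unique {n : ℕ} {g h : Fin n → Fin n} (hg : IsPacked g) (hh : IsPacked h)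
    (hpre : ∀ i j, g i ≤ g j ↔ h i ≤ h j) : g = h := by
  have hlt : ∀ i j, g j < g i ↔ h j < h i := by
    intro i j
    rw [lt_iff_le_not_ge, lt_iff_le_not_ge, hpre, hpre]
  have key : ∀ c : ℕ, ∀ i, (g i : ℕ) = c → g i = h i := by
    intro c
    induction c using Nat.strong_induction_on with
    | _ c IH =>
      intro i hic
      have IH' : ∀ j, g j < g i → g j = h j := by
        intro j hj
        exact IH (g j) (by rw [← hic]; exact hj) j rfl
      set S := Finset.univ.filter (fun j => g j < g i) with hS
      have hSg : S.image g = Finset.univ.filter (fun d => d < g i) := by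
        ext d
        rw [Finset.mem_image, Finset.mem_filter]
        constructor
        · rintro ⟨j, hj, rfl⟩
          exact ⟨Finset.mem_univ _, (Finset.mem_filter.1 hj).2⟩
        · rintro ⟨-, hd⟩
          obtain ⟨j, hj⟩ := hg (g i) ⟨i, rfl⟩ d (le_of_lt hd)
          exact ⟨j, Finset.mem_filter.2 ⟨Finset.mem_univ _, by rw [hj]; exact hd⟩, hj⟩
      have hSh : S.image h = Finset.univ.filter (fun d => d < h i) := by
        ext d
        rw [Finset.mem_image, Finset.mem_filter]
        constructor
        · rintro ⟨j, hj, rfl⟩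
          exact ⟨Finset.mem_univ _, (hlt i j).1 (Finset.mem_filter.1 hj).2⟩
        · rintro ⟨-, hd⟩
          obtain ⟨j, hj⟩ := hh (h i) ⟨i, rfl⟩ d (le_of_lt hd)
          refine ⟨j, Finset.mem_filter.2 ⟨Finset.mem_univ _, (hlt i j).2 ?_⟩, hj⟩
          rw [hj]; exact hd
      have himeq : S.image g = S.image h :=
        Finset.image_congr (fun j hj => IH' j (Finset.mem_filter.1 hj).2)
      rw [hSg, hSh] at himeq
      have h1 : ¬ g i < h i := by
        intro hlt'
        have : g i ∈ Finset.univ.filter (fun d => d < g i) := by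
          rw [himeq]; exact Finset.mem_filter.2 ⟨Finset.mem_univ _, hlt'⟩
        exact absurd (Finset.mem_filter.1 this).2 (lt_irrefl _)
      have h2 : ¬ h i < g i := by
        intro hlt'
        have : h i ∈ Finset.univ.filter (fun d => d < h i) := by
          rw [← himeq]; exact Finset.mem_filter.2 ⟨Finset.mem_univ _, hlt'⟩
        exact absurd (Finset.mem_filter.1 this).2 (lt_irrefl _)
      omega
  funext i
  exact key (g i) i rfl

lemma pack_existsUnique {n : ℕ} (w : Fin n → ℕ) :
    ∃! τ : SetComp n, ∀ i j, w i ≤ w j ↔ τ.1 i ≤ τ.1 j := by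
  refine ⟨⟨pack w, pack_isPacked w⟩, fun i j => (pack_le_iff w i j).symm, ?_⟩
  rintro ⟨τ, hτ⟩ hpre
  refine Subtype.ext ?_
  exact packed_unique hτ (pack_isPacked w)
    (fun i j => by rw [← hpre i j, pack_le_iff])

lemma uniqMinW_iff {n : ℕ} {w : Fin n → ℕ} {g : Fin n → Fin n}
    (hpre : ∀ i j, w i ≤ w j ↔ g i ≤ g j) (A : Finset (Fin n)) :
    UniqMinW w A ↔ UniqMin g A := by
  unfold UniqMinW UniqMin
  apply existsUnique_congr
  intro j
  constructor
  · rintro ⟨h1, h2⟩; exact ⟨h1, fun k hk => (hpre j k).1 (h2 k hk)⟩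
  · rintro ⟨h1, h2⟩; exact ⟨h1, fun k hk => (hpre j k).2 (h2 k hk)⟩

lemma point_iff' {n : ℕ} (π : SetComp n) (w : Fin n → ℕ) (τ : SetComp n)
    (hpre : ∀ i j, w i ≤ w j ↔ τ.1 i ≤ τ.1 j) :
    (∃ x : Fin n → ℝ, faceMin (basicHP π) (fun x => ∑ i, (w i : ℝ) * x i) = {x}) ↔
      SCle π τ := by
  rw [show (fun x => ∑ i, (w i : ℝ) * x i) = Fw w from rfl, point_iff]
  constructor
  · intro h A hA hu
    exact (uniqMinW_iff hpre A).1
      (h A (Finset.mem_filter.2 ⟨Finset.mem_univ _, hA, hu⟩))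
  · intro h A hA
    obtain ⟨-, hne, hu⟩ := Finset.mem_filter.1 hA
    exact (uniqMinW_iff hpre A).2 (h A hne hu)

/-- The face of the basic hypergraphic polytope `𝔭^π⃗` corresponding to a
coloring of composition type `τ⃗` is a point iff `π⃗ ⪯ τ⃗` in the SC preorder; consequently
`Υ(𝔭^π⃗) = ∑_{τ⃗ ⪰ π⃗} M_τ⃗`, stated coefficientwise on words `w : Fin n → ℕ` (the
coefficient of `w` in `M_τ⃗` is `1` iff `w` has composition type `τ⃗`, i.e. induces the same
total preorder as `τ⃗`). -/
theorem stmt18 {n : ℕ} (π : SetComp n) :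
    (∀ τ : SetComp n,
      (∃ x : Fin n → ℝ,
          faceMin (basicHP π) (fun x => ∑ i, ((τ.1 i : ℕ) : ℝ) * x i) = {x}) ↔
        SCle π τ) ∧
      ∀ w : Fin n → ℕ,
        (if ∃ x : Fin n → ℝ,
            faceMin (basicHP π) (fun x => ∑ i, (w i : ℝ) * x i) = {x}
          then (1 : ℚ) else 0) =
          ∑ τ ∈ Finset.univ.filter (fun τ : SetComp n => SCle π τ),
            (if ∀ i j : Fin n, w i ≤ w j ↔ τ.1 i ≤ τ.1 j then (1 : ℚ) else 0) := by

  constructor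
  · intro τ
    exact point_iff' π (fun i => (τ.1 i : ℕ)) τ (fun i j => Iff.rfl)
  · intro w
    obtain ⟨τw, hτw, hτwu⟩ := pack_existsUnique w
    have hcond : (∃ x : Fin n → ℝ,
        faceMin (basicHP π) (fun x => ∑ i, (w i : ℝ) * x i) = {x}) ↔ SCle π τw :=
      point_iff' π w τw hτw
    by_cases hS : SCle π τw
    · rw [if_pos (hcond.2 hS)]
      rw [Finset.sum_eq_single τw]
      · rw [if_pos hτw]
      · intro τ hτ hne
        rw [if_neg]
        intro hP
        exact hne (hτwu τ hP)
      · intro hmem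
        exact absurd (Finset.mem_filter.2 ⟨Finset.mem_univ _, hS⟩) hmem
    · rw [if_neg (fun h => hS (hcond.1 h))]
      symm
      refine Finset.sum_eq_zero fun τ hτ => ?_
      rw [if_neg]
      intro hP
      exact hS ((hτwu τ hP) ▸ (Finset.mem_filter.1 hτ).2)
end
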